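/- For a twice differentiable x: ℝ → ℝ with |x'| < 1 solving x'' + (1-(x')²)^{3/2} x = 0, x(0)=0, x'(0)=β, 0<β<1, one has |x'(t)| ≤ β for all t ∈ ℝ. -/

import Mathlib

theorem stmt_14 (β : ℝ) (hβ0 : 0 < β) (hβ1 : β < 1) (x : ℝ → ℝ)
    (hdiff : ∀ t, DifferentiableAt ℝ x t ∧ DifferentiableAt ℝ (deriv x) t)
    (hv : ∀ t, |deriv x t| < 1)
    (heq : ∀ t, deriv (deriv x) t + (1 - (deriv x t) ^ 2) ^ ((3 : ℝ) / 2) * x t = 0)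
    (h0 : x 0 = 0) (h0' : deriv x 0 = β) (t : ℝ) :
    |deriv x t| ≤ β := by
  set v := deriv x with hvdef
  have hg : ∀ s, (0:ℝ) < 1 - v s ^ 2 := by
    intro s
    have := abs_lt.mp (hv s)
    nlinarith [this.1, this.2]
  set E : ℝ → ℝ := fun s => (1 - v s ^ 2) ^ (-(1:ℝ)/2) + (x s) ^ 2 / 2 with hEdef
  have hE : ∀ s, HasDerivAt E 0 s := by
    intro s
    have hx' : HasDerivAt x (v s) s := (hdiff s).1.hasDerivAt
    have hv' : HasDerivAt v (deriv v s) s := (hdiff s).2.hasDerivAt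
    have hsq : HasDerivAt (fun u => 1 - v u ^ 2)
        (-((2:ℕ) * v s ^ 1 * deriv v s)) s := (hv'.pow 2).const_sub 1
    have h1 : HasDerivAt (fun u => (1 - v u ^ 2) ^ (-(1:ℝ)/2))
        ((-((2:ℕ) * v s ^ 1 * deriv v s)) * (-(1:ℝ)/2) * (1 - v s ^ 2) ^ (-(1:ℝ)/2 - 1)) s := by
      exact hsq.rpow_const (Or.inl (hg s).ne')
    have h2 : HasDerivAt (fun u => (x u) ^ 2 / 2) (((2:ℕ) * x s ^ 1 * v s) / 2) s :=
      (hx'.pow 2).div_const 2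
    have := h1.add h2
    refine this.congr_deriv (Eq.symm ?_)
    have ha : deriv v s = -((1 - v s ^ 2) ^ ((3:ℝ)/2) * x s) := by
      have := heq s
      linarith
    rw [ha]
    have hmul : (1 - v s ^ 2) ^ ((3:ℝ)/2) * (1 - v s ^ 2) ^ (-(1:ℝ)/2 - 1) = 1 := by
      rw [← Real.rpow_add (hg s)]
      norm_num
    push_cast
    linear_combination (v s * x s) * hmul
  have hconst : E t = E 0 := by
    have hdiffE : Differentiable ℝ E := fun s => (hE s).differentiableAt
    have hder : ∀ s, deriv E s = 0 := fun s => (hE s).deriv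
    exact is_const_of_deriv_eq_zero hdiffE hder t 0
  have hE0 : E 0 = (1 - β ^ 2) ^ (-(1:ℝ)/2) := by
    simp [hEdef, h0, h0']
  have hle : (1 - v t ^ 2) ^ (-(1:ℝ)/2) ≤ (1 - β ^ 2) ^ (-(1:ℝ)/2) := by
    have : E t = (1 - β ^ 2) ^ (-(1:ℝ)/2) := hconst.trans hE0
    have hx2 : 0 ≤ (x t) ^ 2 / 2 := by positivity
    simp only [hEdef] at this
    linarith
  have hβg : (0:ℝ) < 1 - β ^ 2 := by nlinarith
  have hbase : 1 - β ^ 2 ≤ 1 - v t ^ 2 :=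
    (Real.rpow_le_rpow_iff_of_neg (hg t) hβg (by norm_num)).mp hle
  have hsq : v t ^ 2 ≤ β ^ 2 := by linarith
  exact abs_le.mpr ⟨by nlinarith, by nlinarith⟩
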